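/- With U, Σ, C and U_Σ as in the context, ‖·‖_{U_Σ} is a norm on U_Σ and (U_Σ, ‖·‖_{U_Σ}) is a Banach space, i.e. it is complete. -/

import Mathlib

open Filter
open scoped InnerProductSpace Topology

noncomputable section

variable {U : Type*} [NormedAddCommGroup U] [InnerProductSpace ℝ U] [CompleteSpace U]

/-- The norm of `u` in the range of `S` (i.e. of `Q^{1/2}(U)` when `S = Q^{1/2}`):
`‖u‖ = inf { ‖v‖ : S v = u }`. -/
def rangeNorm (S : U →L[ℝ] U) (u : U) : ℝ :=
  sInf {r : ℝ | ∃ v : U, S v = u ∧ r = ‖v‖}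

/-- Membership in `U_Σ`: `u` admits a representation `u = ∑ᵢ uᵢ` (convergent in `U`) with
`uᵢ ∈ Qᵢ^{1/2}(U)`, `Qᵢ ∈ Σ`, and `∑ᵢ ‖uᵢ‖_{Qᵢ^{1/2}(U)} < ∞`.  Here `R Q` denotes the
positive square root `Q^{1/2}`. -/
def MemUSigma (Sig : Set (U →L[ℝ] U)) (R : (U →L[ℝ] U) → U →L[ℝ] U) (u : U) : Prop :=
  ∃ (Q : ℕ → U →L[ℝ] U) (v : ℕ → U),
    (∀ i, Q i ∈ Sig) ∧ (∀ i, v i ∈ Set.range (R (Q i))) ∧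
    HasSum v u ∧ Summable (fun i => rangeNorm (R (Q i)) (v i))

/-- The norm on `U_Σ`: the infimum of `∑ᵢ ‖uᵢ‖_{Qᵢ^{1/2}(U)}` over all representations. -/
def normUSigma (Sig : Set (U →L[ℝ] U)) (R : (U →L[ℝ] U) → U →L[ℝ] U) (u : U) : ℝ :=
  sInf {r : ℝ | ∃ (Q : ℕ → U →L[ℝ] U) (v : ℕ → U),
    (∀ i, Q i ∈ Sig) ∧ (∀ i, v i ∈ Set.range (R (Q i))) ∧
    HasSum v u ∧ Summable (fun i => rangeNorm (R (Q i)) (v i)) ∧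
    r = ∑' i, rangeNorm (R (Q i)) (v i)}

open scoped Pointwise
set_option linter.unusedSectionVars false
set_option linter.unusedVariables false
set_option maxHeartbeats 1000000

namespace USigmaAux

lemma rangeNorm_nonneg (S : U →L[ℝ] U) (u : U) : 0 ≤ rangeNorm S u :=
  Real.sInf_nonneg fun r ⟨v, _, hr⟩ => hr ▸ norm_nonneg v

lemma rangeNorm_zero (S : U →L[ℝ] U) : rangeNorm S 0 = 0 :=
  le_antisymm
    (csInf_le ⟨0, fun r ⟨v, _, hr⟩ => hr ▸ norm_nonneg v⟩ ⟨0, map_zero S, norm_zero.symm⟩)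
    (rangeNorm_nonneg S 0)

lemma norm_le_rangeNorm (S : U →L[ℝ] U) {C : ℝ} (hC : 0 < C) (hS : ‖S‖ ≤ C)
    {u : U} (hu : u ∈ Set.range S) : ‖u‖ ≤ C * rangeNorm S u := by
  obtain ⟨w, hw⟩ := hu
  have h : ‖u‖ / C ≤ rangeNorm S u := by
    refine le_csInf ⟨‖w‖, w, hw, rfl⟩ ?_
    rintro r ⟨v, hv, rfl⟩
    rw [div_le_iff₀ hC]
    calc ‖u‖ = ‖S v‖ := by rw [hv]
      _ ≤ ‖S‖ * ‖v‖ := S.le_opNorm v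
      _ ≤ C * ‖v‖ := mul_le_mul_of_nonneg_right hS (norm_nonneg v)
      _ = ‖v‖ * C := mul_comm _ _
  have := (div_le_iff₀ hC).mp h
  linarith [this]

lemma rangeNorm_smul (S : U →L[ℝ] U) {c : ℝ} (hc : c ≠ 0) (u : U) :
    rangeNorm S (c • u) = |c| * rangeNorm S u := by
  have hset : {r : ℝ | ∃ v, S v = c • u ∧ r = ‖v‖}
      = |c| • {r : ℝ | ∃ v, S v = u ∧ r = ‖v‖} := by
    ext r
    constructor
    · rintro ⟨v, hv, rfl⟩
      refine Set.mem_smul_set.mpr ⟨‖c⁻¹ • v‖, ⟨c⁻¹ • v, ?_, rfl⟩, ?_⟩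
      · rw [map_smul, hv, smul_smul, inv_mul_cancel₀ hc, one_smul]
      · rw [smul_eq_mul, norm_smul, Real.norm_eq_abs, abs_inv, ← mul_assoc,
          mul_inv_cancel₀ (abs_ne_zero.mpr hc), one_mul]
    · intro hr
      obtain ⟨r', ⟨v, hv, rfl⟩, rfl⟩ := Set.mem_smul_set.mp hr
      exact ⟨c • v, by rw [map_smul, hv], by rw [smul_eq_mul, norm_smul, Real.norm_eq_abs]⟩
  rw [rangeNorm, hset, Real.sInf_smul_of_nonneg (abs_nonneg c), smul_eq_mul, rangeNorm]

lemma norm_R_le {Sig : Set (U →L[ℝ] U)} {R : (U →L[ℝ] U) → U →L[ℝ] U} {C : ℝ}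
    (hC : 0 < C) (hbdd : ∀ Q ∈ Sig, ‖Q‖ ≤ C ^ 2)
    (hR : ∀ Q ∈ Sig, (R Q).IsPositive ∧ (R Q) ∘L (R Q) = Q)
    {Q : U →L[ℝ] U} (hQ : Q ∈ Sig) : ‖R Q‖ ≤ C := by
  have hsa : ContinuousLinearMap.adjoint (R Q) = R Q :=
    ContinuousLinearMap.isSelfAdjoint_iff'.mp (hR Q hQ).1.isSelfAdjoint
  have h : ‖R Q‖ * ‖R Q‖ = ‖Q‖ := by
    rw [← ContinuousLinearMap.norm_adjoint_comp_self (R Q), hsa, (hR Q hQ).2]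
  have h2 := hbdd Q hQ
  nlinarith [norm_nonneg (R Q)]

variable (Sig : Set (U →L[ℝ] U)) (R : (U →L[ℝ] U) → U →L[ℝ] U)

def ASet (u : U) : Set ℝ :=
  {r : ℝ | ∃ (Q : ℕ → U →L[ℝ] U) (v : ℕ → U),
    (∀ i, Q i ∈ Sig) ∧ (∀ i, v i ∈ Set.range (R (Q i))) ∧
    HasSum v u ∧ Summable (fun i => rangeNorm (R (Q i)) (v i)) ∧
    r = ∑' i, rangeNorm (R (Q i)) (v i)}

lemma normUSigma_eq (u : U) : normUSigma Sig R u = sInf (ASet Sig R u) := rfl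

variable {Sig R}

lemma ASet_nonneg {u : U} {r : ℝ} (h : r ∈ ASet Sig R u) : 0 ≤ r := by
  obtain ⟨Q, v, _, _, _, _, rfl⟩ := h
  exact tsum_nonneg fun i => rangeNorm_nonneg _ _

lemma ASet_bddBelow (u : U) : BddBelow (ASet Sig R u) :=
  ⟨0, fun _ h => ASet_nonneg h⟩

lemma mem_iff_ASet (u : U) : MemUSigma Sig R u ↔ (ASet Sig R u).Nonempty := by
  constructor
  · rintro ⟨Q, v, h1, h2, h3, h4⟩; exact ⟨_, Q, v, h1, h2, h3, h4, rfl⟩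
  · rintro ⟨r, Q, v, h1, h2, h3, h4, _⟩; exact ⟨Q, v, h1, h2, h3, h4⟩

lemma norm_le_of_mem_ASet {C : ℝ} (hC : 0 < C) (hbdd : ∀ Q ∈ Sig, ‖Q‖ ≤ C ^ 2)
    (hR : ∀ Q ∈ Sig, (R Q).IsPositive ∧ (R Q) ∘L (R Q) = Q)
    {u : U} {r : ℝ} (h : r ∈ ASet Sig R u) : ‖u‖ ≤ C * r := by
  obtain ⟨Q, v, hQ, hv, hsum, hsm, rfl⟩ := h
  have hb : ∀ i, ‖v i‖ ≤ C * rangeNorm (R (Q i)) (v i) := fun i =>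
    norm_le_rangeNorm _ hC (norm_R_le hC hbdd hR (hQ i)) (hv i)
  have hsn : Summable (fun i => ‖v i‖) :=
    Summable.of_nonneg_of_le (fun i => norm_nonneg _) hb (hsm.mul_left C)
  calc ‖u‖ = ‖∑' i, v i‖ := by rw [hsum.tsum_eq]
    _ ≤ ∑' i, ‖v i‖ := norm_tsum_le_tsum_norm hsn
    _ ≤ ∑' i, C * rangeNorm (R (Q i)) (v i) := Summable.tsum_le_tsum hb hsn (hsm.mul_left C)
    _ = C * ∑' i, rangeNorm (R (Q i)) (v i) := tsum_mul_left

lemma zero_mem_ASet (hne : Sig.Nonempty) : (0 : ℝ) ∈ ASet Sig R (0 : U) := by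
  obtain ⟨Q₀, hQ₀⟩ := hne
  refine ⟨fun _ => Q₀, fun _ => 0, fun _ => hQ₀, fun _ => ⟨0, map_zero _⟩, hasSum_zero, ?_, ?_⟩
  · simpa [rangeNorm_zero] using summable_zero
  · simp [rangeNorm_zero]


lemma add_mem_ASet {u u' : U} {r r' : ℝ}
    (h : r ∈ ASet Sig R u) (h' : r' ∈ ASet Sig R u') :
    r + r' ∈ ASet Sig R (u + u') := by
  obtain ⟨Q, v, hQ, hv, hsum, hsm, rfl⟩ := h
  obtain ⟨Q', v', hQ', hv', hsum', hsm', rfl⟩ := h'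
  classical
  set Qc : ℕ → U →L[ℝ] U := fun n => if Even n then Q (n / 2) else Q' (n / 2) with hQc
  set w : ℕ → U := fun n => if Even n then v (n / 2) else v' (n / 2) with hw
  have he : ∀ k : ℕ, Even (2 * k) := fun k => even_two_mul k
  have ho : ∀ k : ℕ, ¬ Even (2 * k + 1) := fun k => by
    simp [Nat.even_add_one, Nat.even_mul]
  have hdiv1 : ∀ k : ℕ, 2 * k / 2 = k := fun k => by omega
  have hdiv2 : ∀ k : ℕ, (2 * k + 1) / 2 = k := fun k => by omega
  have hwe : ∀ k : ℕ, w (2 * k) = v k := fun k => by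
    simp only [hw, if_pos (he k), hdiv1]
  have hwo : ∀ k : ℕ, w (2 * k + 1) = v' k := fun k => by
    simp only [hw, if_neg (ho k), hdiv2]
  have hQe : ∀ k : ℕ, Qc (2 * k) = Q k := fun k => by
    simp only [hQc, if_pos (he k), hdiv1]
  have hQo : ∀ k : ℕ, Qc (2 * k + 1) = Q' k := fun k => by
    simp only [hQc, if_neg (ho k), hdiv2]
  set F : ℕ → ℝ := fun n => rangeNorm (R (Qc n)) (w n) with hF
  have hFe : ∀ k : ℕ, F (2 * k) = rangeNorm (R (Q k)) (v k) := fun k => by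
    simp only [hF, hwe, hQe]
  have hFo : ∀ k : ℕ, F (2 * k + 1) = rangeNorm (R (Q' k)) (v' k) := fun k => by
    simp only [hF, hwo, hQo]
  have hsF : Summable F :=
    Summable.even_add_odd (by simpa only [hFe] using hsm) (by simpa only [hFo] using hsm')
  refine ⟨Qc, w, ?_, ?_, ?_, hsF, ?_⟩
  · intro n
    by_cases h : Even n <;> simp only [hQc, if_pos, if_neg, h, ite_true, ite_false]
    · exact hQ _
    · exact hQ' _
  · intro n
    by_cases h : Even n <;> simp only [hQc, hw, h, ite_true, ite_false]
    · exact hv _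
    · exact hv' _
  · exact HasSum.even_add_odd (by simpa only [hwe] using hsum) (by simpa only [hwo] using hsum')
  · have h1 : Summable fun k => F (2 * k) := by simpa only [hFe] using hsm
    have h2 : Summable fun k => F (2 * k + 1) := by simpa only [hFo] using hsm'
    have h3 := tsum_even_add_odd h1 h2
    rw [tsum_congr hFe, tsum_congr hFo] at h3
    exact h3

lemma smul_mem_ASet {c : ℝ} (hc : c ≠ 0) {u : U} {r : ℝ}
    (h : r ∈ ASet Sig R u) : |c| * r ∈ ASet Sig R (c • u) := by
  obtain ⟨Q, v, hQ, hv, hsum, hsm, rfl⟩ := h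
  refine ⟨Q, fun i => c • v i, hQ, ?_, hsum.const_smul c, ?_, ?_⟩
  · intro i; obtain ⟨x, hx⟩ := hv i; exact ⟨c • x, by rw [map_smul, hx]⟩
  · simpa only [rangeNorm_smul _ hc] using hsm.mul_left |c|
  · rw [← tsum_mul_left]; exact tsum_congr fun i => (rangeNorm_smul _ hc _).symm

lemma ASet_smul {c : ℝ} (hc : c ≠ 0) (u : U) :
    ASet Sig R (c • u) = |c| • ASet Sig R u := by
  ext r
  constructor
  · intro h
    have h2 := smul_mem_ASet (inv_ne_zero hc) h
    rw [smul_smul, inv_mul_cancel₀ hc, one_smul] at h2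
    refine Set.mem_smul_set.mpr ⟨|c⁻¹| * r, h2, ?_⟩
    rw [smul_eq_mul, abs_inv, ← mul_assoc, mul_inv_cancel₀ (abs_ne_zero.mpr hc), one_mul]
  · intro h
    obtain ⟨r', hr', rfl⟩ := Set.mem_smul_set.mp h
    exact smul_mem_ASet hc hr'

lemma concat {C : ℝ} (hC : 0 < C) (hbdd : ∀ Q ∈ Sig, ‖Q‖ ≤ C ^ 2)
    (hR : ∀ Q ∈ Sig, (R Q).IsPositive ∧ (R Q) ∘L (R Q) = Q)
    (g : ℕ → U) (u : U) (hg : HasSum g u)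
    (Q : ℕ → ℕ → U →L[ℝ] U) (v : ℕ → ℕ → U)
    (hQ : ∀ k i, Q k i ∈ Sig) (hv : ∀ k i, v k i ∈ Set.range (R (Q k i)))
    (hsum : ∀ k, HasSum (v k) (g k))
    (hsm : ∀ k, Summable fun i => rangeNorm (R (Q k i)) (v k i))
    (htt : Summable fun k => ∑' i, rangeNorm (R (Q k i)) (v k i)) :
    (∑' (k : ℕ) (i : ℕ), rangeNorm (R (Q k i)) (v k i)) ∈ ASet Sig R u := by
  classical
  have e : ℕ ≃ ℕ × ℕ := (Denumerable.eqv (ℕ × ℕ)).symm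
  set F : ℕ × ℕ → ℝ := fun p => rangeNorm (R (Q p.1 p.2)) (v p.1 p.2) with hF
  have hFnn : 0 ≤ F := fun p => rangeNorm_nonneg _ _
  have hFsum : Summable F := (summable_prod_of_nonneg hFnn).mpr ⟨fun k => hsm k, htt⟩
  set G : ℕ × ℕ → U := fun p => v p.1 p.2 with hG
  have hGn : ∀ p : ℕ × ℕ, ‖G p‖ ≤ C * F p := fun p =>
    norm_le_rangeNorm _ hC (norm_R_le hC hbdd hR (hQ _ _)) (hv _ _)
  have hGsum : Summable G :=
    Summable.of_norm (Summable.of_nonneg_of_le (fun p => norm_nonneg _) hGn (hFsum.mul_left C))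
  have hGt : ∑' p, G p = u := by
    rw [Summable.tsum_prod' hGsum (fun k => (hsum k).summable)]
    rw [tsum_congr (fun k => (hsum k).tsum_eq)]
    exact hg.tsum_eq
  have hHasG : HasSum G u := hGt ▸ hGsum.hasSum
  refine ⟨fun n => Q (e n).1 (e n).2, fun n => G (e n), fun n => hQ _ _, fun n => hv _ _, ?_, ?_, ?_⟩
  · exact e.hasSum_iff.mpr hHasG
  · exact e.summable_iff.mpr hFsum
  · rw [show (fun i => rangeNorm (R (Q (e i).1 (e i).2)) (G (e i))) = fun i => F (e i) from rfl]
    rw [e.tsum_eq F, Summable.tsum_prod' hFsum hsm]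

end USigmaAux

open USigmaAux

/-- `U_Σ` is a linear subspace of `U`, `‖·‖_{U_Σ}` is a norm on it, and
`(U_Σ, ‖·‖_{U_Σ})` is complete, i.e. a Banach space. -/
theorem uSigma_banach
    (bU : HilbertBasis ℕ ℝ U)
    (Sig : Set (U →L[ℝ] U)) (hne : Sig.Nonempty)
    (hpos : ∀ Q ∈ Sig, Q.IsPositive)
    (htc : ∀ Q ∈ Sig, Summable (fun i : ℕ => ⟪Q (bU i), bU i⟫_ℝ))
    (C : ℝ) (hC : 0 < C) (hbdd : ∀ Q ∈ Sig, ‖Q‖ ≤ C ^ 2)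
    (R : (U →L[ℝ] U) → U →L[ℝ] U)
    (hR : ∀ Q ∈ Sig, (R Q).IsPositive ∧ (R Q) ∘L (R Q) = Q) :
    -- `U_Σ` is a linear subspace of `U`
    (MemUSigma Sig R (0 : U)) ∧
    (∀ u v : U, MemUSigma Sig R u → MemUSigma Sig R v → MemUSigma Sig R (u + v)) ∧
    (∀ (c : ℝ) (u : U), MemUSigma Sig R u → MemUSigma Sig R (c • u)) ∧
    -- `‖·‖_{U_Σ}` is a norm on `U_Σ`
    (∀ u : U, MemUSigma Sig R u → 0 ≤ normUSigma Sig R u) ∧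
    (∀ u : U, MemUSigma Sig R u → (normUSigma Sig R u = 0 ↔ u = 0)) ∧
    (∀ u v : U, MemUSigma Sig R u → MemUSigma Sig R v →
       normUSigma Sig R (u + v) ≤ normUSigma Sig R u + normUSigma Sig R v) ∧
    (∀ (c : ℝ) (u : U), MemUSigma Sig R u →
       normUSigma Sig R (c • u) = |c| * normUSigma Sig R u) ∧
    -- `(U_Σ, ‖·‖_{U_Σ})` is complete
    (∀ f : ℕ → U, (∀ n, MemUSigma Sig R (f n)) →
       (∀ ε : ℝ, 0 < ε → ∃ N : ℕ, ∀ m ≥ N, ∀ n ≥ N,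
          normUSigma Sig R (f m - f n) < ε) →
       ∃ u : U, MemUSigma Sig R u ∧
         Tendsto (fun n => normUSigma Sig R (f n - u)) atTop (𝓝 0)) := by
  classical
  have memzero : MemUSigma Sig R (0 : U) := (mem_iff_ASet _).mpr ⟨0, zero_mem_ASet hne⟩
  have memadd : ∀ u v : U, MemUSigma Sig R u → MemUSigma Sig R v → MemUSigma Sig R (u + v) := by
    intro u v hu hv
    obtain ⟨r, hr⟩ := (mem_iff_ASet u).mp hu
    obtain ⟨r', hr'⟩ := (mem_iff_ASet v).mp hv
    exact (mem_iff_ASet _).mpr ⟨r + r', add_mem_ASet hr hr'⟩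
  have memsmul : ∀ (c : ℝ) (u : U), MemUSigma Sig R u → MemUSigma Sig R (c • u) := by
    intro c u hu
    by_cases hc : c = 0
    · subst hc; rw [zero_smul]; exact memzero
    · obtain ⟨r, hr⟩ := (mem_iff_ASet u).mp hu
      exact (mem_iff_ASet _).mpr ⟨|c| * r, smul_mem_ASet hc hr⟩
  have memsub : ∀ u v : U, MemUSigma Sig R u → MemUSigma Sig R v → MemUSigma Sig R (u - v) := by
    intro u v hu hv
    have := memadd u ((-1 : ℝ) • v) hu (memsmul (-1) v hv)
    rwa [neg_one_smul, ← sub_eq_add_neg] at this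
  have hnng : ∀ u : U, MemUSigma Sig R u → 0 ≤ normUSigma Sig R u := by
    intro u _
    rw [normUSigma_eq]
    exact Real.sInf_nonneg fun r h => ASet_nonneg h
  have hnl : ∀ u : U, MemUSigma Sig R u → ‖u‖ ≤ C * normUSigma Sig R u := by
    intro u hu
    obtain ⟨r₀, hr₀⟩ := (mem_iff_ASet u).mp hu
    have h : ‖u‖ / C ≤ sInf (ASet Sig R u) :=
      le_csInf ⟨r₀, hr₀⟩ fun r hr => (div_le_iff₀ hC).mpr
        (by linarith [norm_le_of_mem_ASet hC hbdd hR hr])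
    rw [normUSigma_eq]
    linarith [(div_le_iff₀ hC).mp h]
  have hzero : normUSigma Sig R (0 : U) = 0 := by
    rw [normUSigma_eq]
    exact le_antisymm (csInf_le (ASet_bddBelow 0) (zero_mem_ASet hne))
      (Real.sInf_nonneg fun r h => ASet_nonneg h)
  have hiff : ∀ u : U, MemUSigma Sig R u → (normUSigma Sig R u = 0 ↔ u = 0) := by
    intro u hu
    constructor
    · intro h0
      have := hnl u hu
      rw [h0, mul_zero] at this
      exact norm_le_zero_iff.mp this
    · rintro rfl; exact hzero
  have htri : ∀ u v : U, MemUSigma Sig R u → MemUSigma Sig R v →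
      normUSigma Sig R (u + v) ≤ normUSigma Sig R u + normUSigma Sig R v := by
    intro u v hu hv
    obtain ⟨ru, hru⟩ := (mem_iff_ASet u).mp hu
    obtain ⟨rv, hrv⟩ := (mem_iff_ASet v).mp hv
    have key2 : ∀ r ∈ ASet Sig R u, ∀ r' ∈ ASet Sig R v,
        normUSigma Sig R (u + v) ≤ r + r' := by
      intro r hr r' hr'
      rw [normUSigma_eq]
      exact csInf_le (ASet_bddBelow _) (add_mem_ASet hr hr')
    have h1 : ∀ r ∈ ASet Sig R u, normUSigma Sig R (u + v) - r ≤ sInf (ASet Sig R v) :=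
      fun r hr => le_csInf ⟨rv, hrv⟩ fun r' hr' => by linarith [key2 r hr r' hr']
    have h2 : normUSigma Sig R (u + v) - sInf (ASet Sig R v) ≤ sInf (ASet Sig R u) :=
      le_csInf ⟨ru, hru⟩ fun r hr => by linarith [h1 r hr]
    rw [normUSigma_eq Sig R u, normUSigma_eq Sig R v]
    linarith
  have hsmul : ∀ (c : ℝ) (u : U), MemUSigma Sig R u →
      normUSigma Sig R (c • u) = |c| * normUSigma Sig R u := by
    intro c u hu
    by_cases hc : c = 0
    · subst hc
      rw [zero_smul, hzero, abs_zero, zero_mul]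
    · rw [normUSigma_eq, normUSigma_eq, ASet_smul hc,
        Real.sInf_smul_of_nonneg (abs_nonneg c), smul_eq_mul]
  refine ⟨memzero, memadd, memsmul, hnng, hiff, htri, hsmul, ?_⟩
  intro f hmem hcauchy
  -- f is Cauchy in U
  have hfc : CauchySeq f := by
    rw [Metric.cauchySeq_iff]
    intro ε hε
    obtain ⟨N, hN⟩ := hcauchy (ε / (C + 1)) (by positivity)
    refine ⟨N, fun m hm n hn => ?_⟩
    rw [dist_eq_norm]
    have hb1 : ‖f m - f n‖ ≤ C * normUSigma Sig R (f m - f n) :=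
      hnl _ (memsub _ _ (hmem m) (hmem n))
    have hb2 : normUSigma Sig R (f m - f n) < ε / (C + 1) := hN m hm n hn
    have hb3 : C * normUSigma Sig R (f m - f n) < C * (ε / (C + 1)) :=
      (mul_lt_mul_iff_right₀ hC).mpr hb2
    have hb4 : C * (ε / (C + 1)) < ε := by
      rw [mul_div_assoc']
      rw [div_lt_iff₀ (by linarith)]
      nlinarith
    linarith
  obtain ⟨u, htend⟩ := cauchySeq_tendsto_of_complete hfc
  -- key estimate
  have key : ∀ (n : ℕ) (ε : ℝ), 0 < ε →
      (∀ a ≥ n, ∀ b ≥ n, normUSigma Sig R (f a - f b) < ε) →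
      MemUSigma Sig R (u - f n) ∧ normUSigma Sig R (u - f n) ≤ 4 * ε := by
    intro n ε hε hbase
    have hNk : ∀ k : ℕ, ∃ N : ℕ, ∀ a ≥ N, ∀ b ≥ N,
        normUSigma Sig R (f a - f b) < ε * (1 / 2) ^ (k + 1) :=
      fun k => hcauchy _ (by positivity)
    choose Nk hNkspec using hNk
    set m : ℕ → ℕ := fun k => Nat.rec n (fun k ih => max (ih + 1) (Nk k)) k with hm
    have hm0 : m 0 = n := rfl
    have hms : ∀ k, m (k + 1) = max (m k + 1) (Nk k) := fun k => rfl
    have hlt : ∀ k, m k < m (k + 1) := fun k => by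
      rw [hms]; exact lt_of_lt_of_le (Nat.lt_succ_self _) (le_max_left _ _)
    have hmono : StrictMono m := strictMono_nat_of_lt_succ hlt
    have hge : ∀ k, n ≤ m k := fun k => by
      have := hmono.monotone (Nat.zero_le k); rwa [hm0] at this
    have hNle : ∀ k, Nk k ≤ m (k + 1) := fun k => by rw [hms]; exact le_max_right _ _
    set g : ℕ → U := fun k => f (m (k + 1)) - f (m k) with hg
    have hgmem : ∀ k, MemUSigma Sig R (g k) := fun k => memsub _ _ (hmem _) (hmem _)
    have hgbound : ∀ k, normUSigma Sig R (g k) < ε * (1 / 2) ^ k := by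
      intro k
      cases k with
      | zero =>
        have := hbase (m 1) (hge 1) (m 0) (hge 0)
        simpa [hg] using this
      | succ k =>
        exact hNkspec k (m (k + 2)) (le_trans (hNle k) (le_of_lt (hlt (k + 1))))
          (m (k + 1)) (hNle k)
    have hrep : ∀ k : ℕ, ∃ (Qk : ℕ → U →L[ℝ] U) (vk : ℕ → U),
        (∀ i, Qk i ∈ Sig) ∧ (∀ i, vk i ∈ Set.range (R (Qk i))) ∧ HasSum vk (g k) ∧
        (Summable fun i => rangeNorm (R (Qk i)) (vk i)) ∧
        (∑' i, rangeNorm (R (Qk i)) (vk i)) ≤ 2 * ε * (1 / 2) ^ k := by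
      intro k
      have hne' : (ASet Sig R (g k)).Nonempty := (mem_iff_ASet _).mp (hgmem k)
      obtain ⟨r, hrA, hrlt⟩ :=
        Real.lt_sInf_add_pos hne' (show (0 : ℝ) < ε * (1 / 2) ^ k by positivity)
      obtain ⟨Qks, vks, ha1, ha2, ha3, ha4, ha5⟩ := hrA
      refine ⟨Qks, vks, ha1, ha2, ha3, ha4, ?_⟩
      rw [← ha5]
      have hb := hgbound k
      rw [normUSigma_eq] at hb
      linarith
    choose Qk vk h1 h2 h3 h4 h5 using hrep
    have hgeo : Summable fun k : ℕ => 2 * ε * (1 / 2 : ℝ) ^ k :=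
      summable_geometric_two.mul_left _
    have htt : Summable fun k => ∑' i, rangeNorm (R (Qk k i)) (vk k i) :=
      Summable.of_nonneg_of_le (fun k => tsum_nonneg fun i => rangeNorm_nonneg _ _) h5 hgeo
    have hgsumU : Summable g := by
      refine Summable.of_norm (Summable.of_nonneg_of_le (fun k => norm_nonneg _)
        (fun k => ?_) (hgeo.mul_left C))
      have hb1 : ‖g k‖ ≤ C * normUSigma Sig R (g k) := hnl _ (hgmem k)
      have hb2 : C * normUSigma Sig R (g k) ≤ C * (ε * (1 / 2) ^ k) :=
        mul_le_mul_of_nonneg_left (le_of_lt (hgbound k)) hC.le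
      have hb3 : (0 : ℝ) ≤ C * (ε * (1 / 2) ^ k) := by positivity
      calc ‖g k‖ ≤ C * (ε * (1 / 2) ^ k) := le_trans hb1 hb2
        _ ≤ C * (2 * ε * (1 / 2) ^ k) := by nlinarith
    have htel : ∀ K : ℕ, ∑ k ∈ Finset.range K, g k = f (m K) - f n := by
      intro K
      have h := Finset.sum_range_sub (fun k => f (m k)) K
      rw [hm0] at h
      exact h
    have hKtend : Tendsto (fun K => f (m K)) atTop (𝓝 u) := htend.comp hmono.tendsto_atTop
    have h1t : Tendsto (fun K => ∑ k ∈ Finset.range K, g k) atTop (𝓝 (u - f n)) := by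
      have := hKtend.sub (tendsto_const_nhds (x := f n))
      simpa only [htel] using this
    have hsg : HasSum g (u - f n) := by
      have h2t := hgsumU.hasSum.tendsto_sum_nat
      have heq : ∑' k, g k = u - f n := tendsto_nhds_unique h2t h1t
      exact heq ▸ hgsumU.hasSum
    have hconc := concat hC hbdd hR g (u - f n) hsg Qk vk h1 h2 h3 h4 htt
    have hmemr : MemUSigma Sig R (u - f n) := (mem_iff_ASet _).mpr ⟨_, hconc⟩
    have hle : normUSigma Sig R (u - f n)
        ≤ ∑' (k : ℕ) (i : ℕ), rangeNorm (R (Qk k i)) (vk k i) := by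
      rw [normUSigma_eq]
      exact csInf_le (ASet_bddBelow _) hconc
    have hle2 : (∑' (k : ℕ) (i : ℕ), rangeNorm (R (Qk k i)) (vk k i))
        ≤ ∑' k : ℕ, 2 * ε * (1 / 2) ^ k := Summable.tsum_le_tsum h5 htt hgeo
    have hgeo_sum : (∑' k : ℕ, 2 * ε * (1 / 2 : ℝ) ^ k) = 4 * ε := by
      rw [tsum_mul_left, tsum_geometric_two]
      ring
    exact ⟨hmemr, le_trans hle (le_trans hle2 (le_of_eq hgeo_sum))⟩
  -- u ∈ U_Σ
  obtain ⟨N₁, hN₁⟩ := hcauchy 1 one_pos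
  have hmu' := key N₁ 1 one_pos (fun a ha b hb => hN₁ a ha b hb)
  have hmemu : MemUSigma Sig R u := by
    have := memadd _ _ hmu'.1 (hmem N₁)
    rwa [sub_add_cancel] at this
  refine ⟨u, hmemu, ?_⟩
  rw [Metric.tendsto_atTop]
  intro ε hε
  obtain ⟨N, hN⟩ := hcauchy (ε / 5) (by positivity)
  refine ⟨N, fun n hn => ?_⟩
  have hk := key n (ε / 5) (by positivity)
    (fun a ha b hb => hN a (le_trans hn ha) b (le_trans hn hb))
  have heq : normUSigma Sig R (f n - u) = normUSigma Sig R (u - f n) := by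
    have h := hsmul (-1) (u - f n) hk.1
    rw [neg_one_smul, neg_sub] at h
    simpa using h
  rw [Real.dist_eq, sub_zero, heq, abs_of_nonneg (hnng _ hk.1)]
  calc normUSigma Sig R (u - f n) ≤ 4 * (ε / 5) := hk.2
    _ < ε := by linarith


end
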